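/- For every d ≥ 5 and every finite poset P on [d], the number of facets of the order polytope O(P), namely m⋆(P) + m⋆(P) + |E(P)| (number of minimal elements plus number of maximal elements plus number of cover relations), is at most ⌊(d+1)/2⌋·(d − ⌊(d+1)/2⌋) + d. -/

import Mathlib

/-- `b` covers `a` in the partial order `r`. -/
def covRel {α : Type*} (r : α → α → Prop) (a b : α) : Prop :=
  r a b ∧ a ≠ b ∧ ∀ c, r a c → r c b → c = a ∨ c = b

/-- Auxiliary symmetric pairing function. -/
def halfPair (n : ℕ) : Sym2 (Fin n) → ℕ × ℕ :=
  Sym2.lift ⟨fun a b : Fin n =>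
      (((a : ℕ) % 2) * ((a : ℕ) / 2) + ((b : ℕ) % 2) * ((b : ℕ) / 2),
       (1 - (a : ℕ) % 2) * ((a : ℕ) / 2) + (1 - (b : ℕ) % 2) * ((b : ℕ) / 2)),
    by intro a b; simp [Prod.ext_iff]; constructor <;> apply Nat.add_comm⟩

open Finset SimpleGraph in
/-- Edge count of the bipartite Turán graph. -/
lemma turan2_card_aux (n : ℕ) :
    #(turanGraph n 2).edgeFinset ≤ (n / 2) * (n - n / 2) := by
  classical
  have hmap : ∀ e ∈ (turanGraph n 2).edgeFinset,
      halfPair n e ∈ (Finset.range (n / 2)) ×ˢ (Finset.range (n - n / 2)) := by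
    intro e he
    induction e using Sym2.ind with
    | _ a b =>
      simp only [mem_edgeFinset, mem_edgeSet, turanGraph_adj] at he
      have ha := a.isLt; have hb := b.isLt
      simp only [halfPair, Sym2.lift_mk, Finset.mem_product, Finset.mem_range]
      rcases Nat.mod_two_eq_zero_or_one (a : ℕ) with h1 | h1 <;>
        rcases Nat.mod_two_eq_zero_or_one (b : ℕ) with h2 | h2 <;>
        simp [h1, h2] <;> omega
  have hinj : Set.InjOn (halfPair n) ((turanGraph n 2).edgeFinset : Set (Sym2 (Fin n))) := by
    intro e1 h1 e2 h2 heq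
    induction e1 using Sym2.ind with
    | _ a b =>
      induction e2 using Sym2.ind with
      | _ c d =>
        simp only [mem_coe, mem_edgeFinset, mem_edgeSet, turanGraph_adj] at h1 h2
        simp only [halfPair, Sym2.lift_mk, Prod.ext_iff] at heq
        rw [Sym2.eq_iff]
        rcases Nat.mod_two_eq_zero_or_one (a : ℕ) with p1 | p1 <;>
          rcases Nat.mod_two_eq_zero_or_one (b : ℕ) with p2 | p2 <;>
          rcases Nat.mod_two_eq_zero_or_one (c : ℕ) with p3 | p3 <;>
          rcases Nat.mod_two_eq_zero_or_one (d : ℕ) with p4 | p4 <;>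
          simp [p1, p2, p3, p4, Fin.ext_iff] at heq ⊢ <;> omega
  calc #(turanGraph n 2).edgeFinset
      ≤ #((Finset.range (n / 2)) ×ˢ (Finset.range (n - n / 2))) :=
        Finset.card_le_card_of_injOn (halfPair n) hmap hinj
    _ = (n / 2) * (n - n / 2) := by simp
open Finset SimpleGraph in
/-- Mantel-type bound from Turán's theorem. -/
lemma mantel_aux {V : Type} [Fintype V] [DecidableEq V] (G : SimpleGraph V)
    [DecidableRel G.Adj] (h3 : G.CliqueFree 3) :
    G.edgeFinset.card ≤ (Fintype.card V / 2) * (Fintype.card V - Fintype.card V / 2) := by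
  obtain ⟨Gm, hdec, hGm⟩ := exists_isTuranMaximal (V := V) (r := 2) (by norm_num)
  have h1 : #G.edgeFinset ≤ #Gm.edgeFinset := hGm.2 h3
  obtain ⟨f⟩ := (isTuranMaximal_iff_nonempty_iso_turanGraph (by norm_num)).1 hGm
  have h2 : #Gm.edgeFinset = #(turanGraph (Fintype.card V) 2).edgeFinset :=
    f.card_edgeFinset_eq
  exact (h1.trans_eq h2).trans (turan2_card_aux _)

lemma numeric_aux (d i : ℕ) (hd : 5 ≤ d) (hi : i ≤ d) :
    ((d - i) / 2) * ((d - i) - (d - i) / 2) + i ≤ ((d + 1) / 2) * (d - (d + 1) / 2) := by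
  have h1 : (d + 1) / 2 = d - d / 2 := by omega
  have h2 : d - (d + 1) / 2 = d / 2 := by omega
  rw [h2, h1]
  set m := d - i with hm
  set a := m / 2 with ha'
  set b := m - m / 2 with hb'
  set c := d / 2 with hc'
  set e := d - d / 2 with he'
  rcases Nat.lt_or_ge m 2 with hm2 | hm2
  · have ha0 : a = 0 := by omega
    have hc2 : 2 ≤ c := by omega
    have hce : c ≤ e := by omega
    have hde : d = c + e := by omega
    have : d ≤ e * c :=
      calc d = c + e := hde
        _ ≤ e + e := by omega
        _ = 2 * e := by ring
        _ ≤ c * e := Nat.mul_le_mul_right e hc2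
        _ = e * c := Nat.mul_comm c e
    rw [ha0, Nat.zero_mul, Nat.zero_add]
    omega
  · have ha1 : 1 ≤ a := by omega
    have hb1 : 1 ≤ b := by omega
    obtain ⟨x, y, hx, hy, hxy⟩ : ∃ x y, c = a + x ∧ e = b + y ∧ x + y = i :=
      ⟨c - a, e - b, by omega, by omega, by omega⟩
    rw [hx, hy]
    have key : a * b + (x + y) ≤ (b + y) * (a + x) := by nlinarith
    calc a * b + i = a * b + (x + y) := by rw [hxy]
      _ ≤ (b + y) * (a + x) := key

/-- upper bound on the number of facets of an order polytope,
`m⋆(P) + m⋆(P) + |E(P)| ≤ ⌊(d+1)/2⌋·(d − ⌊(d+1)/2⌋) + d` for `d ≥ 5`. -/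
theorem stmt_6 (d : ℕ) (hd : 5 ≤ d) (r : Fin d → Fin d → Prop)
    (hpo : IsPartialOrder (Fin d) r) :
    Nat.card {a : Fin d // ∀ b, r b a → b = a} +
      Nat.card {a : Fin d // ∀ b, r a b → b = a} +
      Nat.card {p : Fin d × Fin d // covRel r p.1 p.2} ≤
    ((d + 1) / 2) * (d - (d + 1) / 2) + d := by
  classical
  have hanti : ∀ a b, r a b → r b a → a = b := fun a b => hpo.antisymm a b
  have htrans : ∀ a b c, r a b → r b c → r a c := fun a b c => hpo.trans a b c
  set P : Fin d → Prop := fun a => ∀ b, r b a → b = a with hP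
  set Q : Fin d → Prop := fun a => ∀ b, r a b → b = a with hQ
  set Is : Fin d → Prop := fun a => P a ∧ Q a with hIs
  set i := Fintype.card {a : Fin d // Is a} with hi
  -- covers avoid isolated elements
  have hcovIs : ∀ a b, covRel r a b → ¬ Is a ∧ ¬ Is b := by
    rintro a b ⟨hab, hne, -⟩
    constructor
    · rintro ⟨-, hQa⟩; exact hne (hQa b hab).symm
    · rintro ⟨hPb, -⟩; exact hne (hPb a hab)
  -- the cover graph on non-isolated elements
  let H : SimpleGraph {x : Fin d // ¬ Is x} :=
    { Adj := fun a b => covRel r a.1 b.1 ∨ covRel r b.1 a.1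
      symm := ⟨fun a b h => h.symm⟩
      loopless := ⟨fun a h => by
        rcases h with ⟨-, hne, -⟩ | ⟨-, hne, -⟩ <;> exact hne rfl⟩ }
  have no_mid : ∀ x y z : Fin d, r x y → x ≠ y → r y z → y ≠ z →
      ¬ (covRel r x z ∨ covRel r z x) := by
    intro x y z h1 hne1 h2 hne2 h
    have hxz : r x z := htrans x y z h1 h2
    rcases h with ⟨-, -, hc⟩ | ⟨hzx, -, -⟩
    · rcases hc y h1 h2 with h | h
      · exact hne1 h.symm
      · exact hne2 h
    · have hxz' : x = z := hanti x z hxz hzx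
      exact hne1 (hanti x y h1 (hxz' ▸ h2))
  have hH3 : H.CliqueFree 3 := by
    intro t ht
    rw [SimpleGraph.is3Clique_iff] at ht
    obtain ⟨a, b, c, hab, hac, hbc, -⟩ := ht
    have lt_of : ∀ u v : {x : Fin d // ¬ Is x}, H.Adj u v →
        (r u.1 v.1 ∧ u.1 ≠ v.1) ∨ (r v.1 u.1 ∧ v.1 ≠ u.1) := by
      rintro u v (⟨h1, h2, -⟩ | ⟨h1, h2, -⟩)
      exacts [Or.inl ⟨h1, h2⟩, Or.inr ⟨h1, h2⟩]
    rcases lt_of _ _ hab with ⟨h1, e1⟩ | ⟨h1, e1⟩ <;>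
      rcases lt_of _ _ hbc with ⟨h2, e2⟩ | ⟨h2, e2⟩ <;>
      rcases lt_of _ _ hac with ⟨h3, e3⟩ | ⟨h3, e3⟩ <;>
      first
        | exact no_mid _ _ _ h1 e1 h2 e2 hac
        | exact no_mid _ _ _ h3 e3 h2 e2 hab
        | exact no_mid _ _ _ h3 e3 h1 e1 hbc.symm
        | exact no_mid _ _ _ h1 e1 h3 e3 hbc
        | exact no_mid _ _ _ h2 e2 h3 e3 hab.symm
        | exact no_mid _ _ _ h2 e2 h1 e1 hac.symm
  -- injection from covers to edges
  have hC : Nat.card {p : Fin d × Fin d // covRel r p.1 p.2} ≤ H.edgeFinset.card := by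
    have hinj : Function.Injective
        (fun cc : {p : Fin d × Fin d // covRel r p.1 p.2} =>
          (⟨s(⟨cc.1.1, (hcovIs _ _ cc.2).1⟩, ⟨cc.1.2, (hcovIs _ _ cc.2).2⟩),
            Or.inl cc.2⟩ : H.edgeSet)) := by
      rintro ⟨⟨a, b⟩, hab⟩ ⟨⟨c, e⟩, hce⟩ h
      replace h := Sym2.eq_iff.1 (congrArg Subtype.val h)
      simp only [Subtype.mk.injEq] at h
      rcases h with ⟨h1, h2⟩ | ⟨h1, h2⟩
      · simp [Prod.ext_iff, h1, h2]
      · exfalso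
        subst h1; subst h2
        exact hab.2.1 (hanti _ _ hab.1 hce.1)
    have h1 := Nat.card_le_card_of_injective _ hinj
    have h2 : Nat.card H.edgeSet = H.edgeFinset.card := by
      rw [Nat.card_eq_fintype_card, SimpleGraph.edgeFinset, Set.toFinset_card]
    exact le_trans h1 (le_of_eq h2)
  -- Mantel bound
  have hcard : Fintype.card {x : Fin d // ¬ Is x} = d - i := by
    rw [Fintype.card_subtype_compl, Fintype.card_fin, hi]
  have hE : H.edgeFinset.card ≤ ((d - i) / 2) * ((d - i) - (d - i) / 2) := by
    have := mantel_aux H hH3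
    rwa [hcard] at this
  -- minimal + maximal count
  have hPQ : Nat.card {a : Fin d // P a} + Nat.card {a : Fin d // Q a} ≤ d + i := by
    rw [Nat.card_eq_fintype_card, Nat.card_eq_fintype_card,
      Fintype.card_subtype, Fintype.card_subtype]
    have h := Finset.card_union_add_card_inter
      (Finset.univ.filter (fun x => P x)) (Finset.univ.filter (fun x => Q x))
    have h2 : (Finset.univ.filter (fun x => P x)) ∩ (Finset.univ.filter (fun x => Q x))
        = Finset.univ.filter (fun x => Is x) := by
      ext x; simp [hIs]
    have h3 : ((Finset.univ.filter (fun x => P x)) ∪ (Finset.univ.filter (fun x => Q x))).card ≤ d := by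
      calc ((Finset.univ.filter (fun x => P x)) ∪ (Finset.univ.filter (fun x => Q x))).card
          ≤ (Finset.univ : Finset (Fin d)).card := Finset.card_le_card (Finset.subset_univ _)
        _ = d := by simp
    have h4 : i = (Finset.univ.filter (fun x => Is x)).card := by
      rw [hi, Fintype.card_subtype]
    rw [h2] at h
    omega
  have hid : i ≤ d := by
    have := Fintype.card_subtype_le Is
    rwa [Fintype.card_fin] at this
  have hnum := numeric_aux d i hd hid
  have hCE := hC.trans hE
  calc Nat.card {a : Fin d // ∀ b, r b a → b = a} +
        Nat.card {a : Fin d // ∀ b, r a b → b = a} +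
        Nat.card {p : Fin d × Fin d // covRel r p.1 p.2}
      ≤ (d + i) + ((d - i) / 2) * ((d - i) - (d - i) / 2) := add_le_add hPQ hCE
    _ ≤ d + ((d + 1) / 2) * (d - (d + 1) / 2) := by
        linarith [hnum]
    _ = ((d + 1) / 2) * (d - (d + 1) / 2) + d := Nat.add_comm _ _
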